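/- For 0 < ρ ≤ 1 and σ ∈ (0,1) with 1/ρ ≥ 1 − σ, for each n ≥ 2 and 0 < h ≤ (n+1)^{-θ}, the L_ρ-norm of the first-order difference of w_{σ,θ} over the rising block [a_{n,θ}, a_{n,θ}+n^{-θ}) satisfies ‖Δ_h w_{σ,θ}‖_{L_ρ([a_{n,θ}, a_{n,θ}+n^{-θ}))} ≤ h · n^{−θ(σ + 1/ρ − 1)}. -/

import Mathlib

open MeasureTheory Real Set

noncomputable def zetaR (θ : ℝ) : ℝ := ∑' n : ℕ, ((n : ℝ) + 1) ^ (-θ)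

noncomputable def aSeq (θ : ℝ) (n : ℕ) : ℝ :=
  4 * ∑ j ∈ Finset.Icc 1 (n - 1), (j : ℝ) ^ (-θ)

noncomputable def wPiece (σ θ : ℝ) (n : ℕ) (ξ : ℝ) : ℝ :=
  if ξ < aSeq θ n + (n : ℝ) ^ (-θ) then (ξ - aSeq θ n) ^ σ
  else if ξ < aSeq θ n + 2 * (n : ℝ) ^ (-θ) then (n : ℝ) ^ (-(θ * σ))
  else if ξ < aSeq θ n + 3 * (n : ℝ) ^ (-θ) then (aSeq θ n + 3 * (n : ℝ) ^ (-θ) - ξ) ^ σ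
  else 0

open Classical in
noncomputable def wFn (σ θ : ℝ) (ξ : ℝ) : ℝ :=
  if h : ∃ n : ℕ, 2 ≤ n ∧ aSeq θ n ≤ ξ ∧ ξ < aSeq θ (n + 1) then wPiece σ θ h.choose ξ
  else 0

lemma aSeq_mono {θ : ℝ} {m n : ℕ} (hmn : m ≤ n) : aSeq θ m ≤ aSeq θ n := by
  unfold aSeq
  have : Finset.Icc 1 (m - 1) ⊆ Finset.Icc 1 (n - 1) :=
    Finset.Icc_subset_Icc_right (by omega)
  refine mul_le_mul_of_nonneg_left ?_ (by norm_num)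
  refine Finset.sum_le_sum_of_subset_of_nonneg this fun j _ _ => ?_
  exact Real.rpow_nonneg (Nat.cast_nonneg j) _

lemma aSeq_succ (θ : ℝ) {n : ℕ} (hn : 1 ≤ n) :
    aSeq θ (n + 1) = aSeq θ n + 4 * (n : ℝ) ^ (-θ) := by
  unfold aSeq
  obtain ⟨k, rfl⟩ : ∃ k, n = k + 1 := ⟨n - 1, by omega⟩
  rw [show k + 1 + 1 - 1 = k + 1 from rfl, show k + 1 - 1 = k from rfl,
    Finset.sum_Icc_succ_top (by omega : 1 ≤ k + 1)]
  push_cast; ring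

lemma wFn_eq (σ : ℝ) {θ : ℝ} {n : ℕ} (hn : 2 ≤ n) {ξ : ℝ}
    (h1 : aSeq θ n ≤ ξ) (h2 : ξ < aSeq θ (n + 1)) :
    wFn σ θ ξ = wPiece σ θ n ξ := by
  classical
  have hex : ∃ m : ℕ, 2 ≤ m ∧ aSeq θ m ≤ ξ ∧ ξ < aSeq θ (m + 1) := ⟨n, hn, h1, h2⟩
  rw [wFn, dif_pos hex]
  obtain ⟨hm2, hmle, hmlt⟩ := hex.choose_spec
  congr 1
  set m := hex.choose with hm
  rcases lt_trichotomy m n with hlt | heq | hgt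
  · have : aSeq θ (m + 1) ≤ aSeq θ n := aSeq_mono (by omega)
    linarith
  · exact heq
  · have : aSeq θ (n + 1) ≤ aSeq θ m := aSeq_mono (by omega)
    linarith

/-- For 0 < ρ ≤ 1 and σ ∈ (0,1) with 1/ρ ≥ 1 − σ, for each n ≥ 2 and 0 < h ≤ (n+1)^{-θ}:
‖Δ_h w_{σ,θ}‖_{L_ρ([a_{n,θ}, a_{n,θ}+n^{-θ}))} ≤ h · n^{−θ(σ+1/ρ−1)}. -/
theorem stmt12 (σ θ ρ : ℝ) (hσ0 : 0 < σ) (hσ1 : σ < 1) (hθ : 1 < θ)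
    (hρ0 : 0 < ρ) (hρ1 : ρ ≤ 1) (h1ρ : 1 - σ ≤ 1 / ρ) :
    ∀ n : ℕ, 2 ≤ n → ∀ h : ℝ, 0 < h → h ≤ ((n : ℝ) + 1) ^ (-θ) →
      (∫ ξ in Set.Ico (aSeq θ n) (aSeq θ n + (n : ℝ) ^ (-θ)),
          |wFn σ θ (ξ + h) - wFn σ θ ξ| ^ ρ) ^ (1 / ρ) ≤
        h * (n : ℝ) ^ (-(θ * (σ + 1 / ρ - 1))) := by
  intro n hn h hh0 hhub
  set a := aSeq θ n with ha
  set L := (n : ℝ) ^ (-θ) with hL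
  have hn0 : (0 : ℝ) < n := by positivity
  have hL0 : 0 < L := Real.rpow_pos_of_pos hn0 _
  have hhL : h ≤ L := by
    refine hhub.trans ?_
    exact Real.rpow_le_rpow_of_nonpos hn0 (by linarith) (by linarith)
  have hsucc : aSeq θ (n + 1) = a + 4 * L := aSeq_succ θ (by omega)
  -- continuity facts
  have hcσ : Continuous fun x : ℝ => x ^ σ := by
    rw [continuous_iff_continuousAt]
    exact fun x => Real.continuousAt_rpow_const x σ (Or.inr hσ0.le)
  have hcρ : Continuous fun x : ℝ => x ^ ρ := by
    rw [continuous_iff_continuousAt]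
    exact fun x => Real.continuousAt_rpow_const x ρ (Or.inr hρ0.le)
  set g : ℝ → ℝ := fun t => min (t + h) L ^ σ - t ^ σ with hg
  have hgc : Continuous g :=
    (hcσ.comp ((continuous_id.add continuous_const).min continuous_const)).sub
      (hcσ.comp continuous_id)
  have hgρc : Continuous fun t => g t ^ ρ := hcρ.comp hgc
  have hg_nonneg : ∀ t ∈ Icc (0 : ℝ) L, 0 ≤ g t := by
    intro t ht
    have : t ^ σ ≤ min (t + h) L ^ σ :=
      Real.rpow_le_rpow ht.1 (le_min (by linarith) ht.2) hσ0.le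
    simpa [hg] using sub_nonneg.mpr this
  -- Step 1: rewrite the integrand
  have hstep1 : (∫ ξ in Set.Ico a (a + L), |wFn σ θ (ξ + h) - wFn σ θ ξ| ^ ρ)
      = ∫ ξ in Set.Ico a (a + L), g (ξ - a) ^ ρ := by
    refine setIntegral_congr_fun measurableSet_Ico fun ξ hξ => ?_
    obtain ⟨hξ1, hξ2⟩ := hξ
    have hw1 : wFn σ θ ξ = (ξ - a) ^ σ := by
      rw [wFn_eq σ hn hξ1 (by rw [hsucc]; linarith)]
      rw [wPiece, if_pos (by rw [← ha, ← hL]; linarith)]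
    have hw2 : wFn σ θ (ξ + h) = min (ξ - a + h) L ^ σ := by
      rw [wFn_eq σ hn (by linarith) (by rw [hsucc]; linarith)]
      rw [wPiece]
      by_cases hc : ξ + h < a + L
      · rw [if_pos (by rw [← ha, ← hL]; linarith)]
        rw [min_eq_left (by linarith)]
        ring_nf
        rw [← ha]
      · rw [if_neg (by rw [← ha, ← hL]; linarith), if_pos (by rw [← ha, ← hL]; linarith)]
        rw [min_eq_right (by linarith)]
        rw [hL, ← Real.rpow_mul (Nat.cast_nonneg n), neg_mul]
    have hnn : (ξ - a) ^ σ ≤ min (ξ - a + h) L ^ σ :=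
      Real.rpow_le_rpow (by linarith) (le_min (by linarith) (by linarith)) hσ0.le
    rw [hw1, hw2, abs_of_nonneg (sub_nonneg.mpr hnn)]
  -- Step 2: translate to [0, L]
  have hstep2 : (∫ ξ in Set.Ico a (a + L), g (ξ - a) ^ ρ)
      = ∫ t in Set.Ioc (0 : ℝ) L, g t ^ ρ := by
    rw [integral_Ico_eq_integral_Ioo, ← integral_Ioc_eq_integral_Ioo,
      ← intervalIntegral.integral_of_le (by linarith : a ≤ a + L),
      intervalIntegral.integral_comp_sub_right (fun t => g t ^ ρ) a]
    rw [show a - a = (0:ℝ) by ring, show a + L - a = L by ring,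
      intervalIntegral.integral_of_le hL0.le]
  -- integral of g over [0, L]
  have hInt_min : ∀ u v : ℝ, IntervalIntegrable (fun t => min (t + h) L ^ σ) volume u v :=
    fun u v =>
      ((hcσ.comp ((continuous_id.add continuous_const).min continuous_const))).intervalIntegrable u v
  have hInt_pow : ∀ u v : ℝ, IntervalIntegrable (fun t : ℝ => t ^ σ) volume u v :=
    fun u v => (hcσ.comp continuous_id).intervalIntegrable u v
  have hIg : ∫ t in (0:ℝ)..L, g t ≤ h * L ^ σ := by
    have e1 : (∫ t in (0:ℝ)..L, g t)
        = (∫ t in (0:ℝ)..L, min (t + h) L ^ σ) - ∫ t in (0:ℝ)..L, t ^ σ := by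
      simpa [hg] using intervalIntegral.integral_sub (hInt_min 0 L) (hInt_pow 0 L)
    have e2 : (∫ t in (0:ℝ)..(L - h), min (t + h) L ^ σ)
        = ∫ t in (0:ℝ)..(L - h), (t + h) ^ σ := by
      refine intervalIntegral.integral_congr fun t ht => ?_
      rw [uIcc_of_le (by linarith)] at ht
      rw [min_eq_left (by linarith [ht.2])]
    have e3 : (∫ t in (L - h)..L, min (t + h) L ^ σ)
        = ∫ t in (L - h)..L, L ^ σ := by
      refine intervalIntegral.integral_congr fun t ht => ?_
      rw [uIcc_of_le (by linarith)] at ht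
      rw [min_eq_right (by linarith [ht.1])]
    have e4 : (∫ t in (0:ℝ)..(L - h), min (t + h) L ^ σ)
        + (∫ t in (L - h)..L, min (t + h) L ^ σ)
        = ∫ t in (0:ℝ)..L, min (t + h) L ^ σ :=
      intervalIntegral.integral_add_adjacent_intervals (hInt_min 0 (L - h)) (hInt_min (L - h) L)
    have e5 : (∫ t in (0:ℝ)..(L - h), (t + h) ^ σ) = ∫ t in h..L, t ^ σ := by
      rw [intervalIntegral.integral_comp_add_right (fun t => t ^ σ) h]
      norm_num
    have hσne : σ + 1 ≠ 0 := by linarith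
    have rp : ∀ u v : ℝ, (∫ t in u..v, t ^ σ) = (v ^ (σ + 1) - u ^ (σ + 1)) / (σ + 1) :=
      fun u v => integral_rpow (Or.inl (by linarith))
    have e6 : (∫ t in (L - h)..L, (L:ℝ) ^ σ) = h * L ^ σ := by
      rw [intervalIntegral.integral_const, smul_eq_mul]
      ring
    have hzero : (0:ℝ) ^ (σ + 1) = 0 := Real.zero_rpow hσne
    have hpow_nonneg : 0 ≤ h ^ (σ + 1) := Real.rpow_nonneg hh0.le _
    rw [e1, ← e4, e2, e3, e5, e6, rp h L, rp 0 L, hzero]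
    have heq : (L ^ (σ + 1) - h ^ (σ + 1)) / (σ + 1) - (L ^ (σ + 1) - 0) / (σ + 1)
        = -(h ^ (σ + 1) / (σ + 1)) := by ring
    have hpos : 0 ≤ h ^ (σ + 1) / (σ + 1) := by positivity
    linarith [heq, hpos]
  have hIg_Ioc : ∫ t in Set.Ioc (0:ℝ) L, g t ≤ h * L ^ σ := by
    rwa [← intervalIntegral.integral_of_le hL0.le]
  have hIg_nonneg : 0 ≤ ∫ t in Set.Ioc (0:ℝ) L, g t :=
    setIntegral_nonneg measurableSet_Ioc fun t ht => hg_nonneg t ⟨ht.1.le, ht.2⟩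
  -- Step 3: Hölder
  have hg_ae_nonneg : 0 ≤ᵐ[volume.restrict (Set.Ioc (0:ℝ) L)] g :=
    (ae_restrict_iff' measurableSet_Ioc).mpr
      (Filter.Eventually.of_forall fun t ht => hg_nonneg t ⟨ht.1.le, ht.2⟩)
  have hgρ_ae_nonneg : 0 ≤ᵐ[volume.restrict (Set.Ioc (0:ℝ) L)] fun t => g t ^ ρ :=
    (ae_restrict_iff' measurableSet_Ioc).mpr
      (Filter.Eventually.of_forall fun t ht =>
        Real.rpow_nonneg (hg_nonneg t ⟨ht.1.le, ht.2⟩) _)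
  have hg_int : IntegrableOn g (Set.Ioc (0:ℝ) L) :=
    hgc.integrableOn_Ioc
  have hgρ_int : IntegrableOn (fun t => g t ^ ρ) (Set.Ioc (0:ℝ) L) :=
    hgρc.integrableOn_Ioc
  have key : (∫ t in Set.Ioc (0:ℝ) L, g t ^ ρ) ≤ L ^ (1 - ρ) * (h * L ^ σ) ^ ρ := by
    have hrhs_nonneg : 0 ≤ L ^ (1 - ρ) * (h * L ^ σ) ^ ρ := by positivity
    rw [← ENNReal.ofReal_le_ofReal_iff hrhs_nonneg,
      ofReal_integral_eq_lintegral_ofReal hgρ_int hgρ_ae_nonneg]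
    have hFeq : ∀ᵐ t ∂(volume.restrict (Set.Ioc (0:ℝ) L)),
        ENNReal.ofReal (g t ^ ρ) = ENNReal.ofReal (g t) ^ ρ := by
      filter_upwards [hg_ae_nonneg] with t ht
      rw [← ENNReal.ofReal_rpow_of_nonneg ht hρ0.le]
    rw [lintegral_congr_ae hFeq]
    have hFmeas : AEMeasurable (fun t => ENNReal.ofReal (g t) ^ ρ)
        (volume.restrict (Set.Ioc (0:ℝ) L)) :=
      (ENNReal.continuous_rpow_const.comp
        (ENNReal.continuous_ofReal.comp hgc)).measurable.aemeasurable
    rcases eq_or_lt_of_le hρ1 with hρeq | hρlt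
    · -- ρ = 1
      subst hρeq
      simp only [ENNReal.rpow_one]
      rw [← ofReal_integral_eq_lintegral_ofReal hg_int hg_ae_nonneg]
      refine ENNReal.ofReal_le_ofReal (hIg_Ioc.trans ?_)
      have h11 : (1:ℝ) - 1 = 0 := by norm_num
      rw [h11, Real.rpow_zero, Real.rpow_one, one_mul]
    · -- ρ < 1
      have hpq : (1 / ρ).HolderConjugate (1 / (1 - ρ)) := by
        constructor
        · rw [one_div, one_div, inv_inv, inv_inv, inv_one]; ring
        · positivity
        · have : 0 < 1 - ρ := by linarith
          positivity
      have := ENNReal.lintegral_mul_le_Lp_mul_Lq (volume.restrict (Set.Ioc (0:ℝ) L))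
        hpq hFmeas (aemeasurable_const :
          AEMeasurable (fun _ : ℝ => (1 : ENNReal)) (volume.restrict (Set.Ioc (0:ℝ) L)))
      simp only [Pi.mul_apply, mul_one, ENNReal.one_rpow, lintegral_const,
        Measure.restrict_apply_univ, one_mul] at this
      have hrw : ∀ t, (ENNReal.ofReal (g t) ^ ρ) ^ (1 / ρ) = ENNReal.ofReal (g t) := by
        intro t
        rw [← ENNReal.rpow_mul, mul_one_div_cancel hρ0.ne', ENNReal.rpow_one]
      simp only [hrw, one_div_one_div] at this
      refine this.trans ?_
      rw [← ofReal_integral_eq_lintegral_ofReal hg_int hg_ae_nonneg]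
      rw [Real.volume_Ioc, sub_zero]
      calc ENNReal.ofReal (∫ t in Set.Ioc (0:ℝ) L, g t) ^ ρ * ENNReal.ofReal L ^ (1 - ρ)
          ≤ ENNReal.ofReal (h * L ^ σ) ^ ρ * ENNReal.ofReal L ^ (1 - ρ) := by
            gcongr
            all_goals exact ENNReal.ofReal_le_ofReal hIg_Ioc
        _ = ENNReal.ofReal (L ^ (1 - ρ) * (h * L ^ σ) ^ ρ) := by
            rw [ENNReal.ofReal_rpow_of_nonneg (by positivity) hρ0.le,
              ENNReal.ofReal_rpow_of_nonneg hL0.le (by linarith : (0:ℝ) ≤ 1 - ρ),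
              ← ENNReal.ofReal_mul (by positivity)]
            congr 1
            ring
  -- Conclusion
  rw [hstep1, hstep2]
  have hbase_nonneg : 0 ≤ ∫ t in Set.Ioc (0:ℝ) L, g t ^ ρ :=
    setIntegral_nonneg measurableSet_Ioc fun t ht =>
      Real.rpow_nonneg (hg_nonneg t ⟨ht.1.le, ht.2⟩) _
  have hmono : (∫ t in Set.Ioc (0:ℝ) L, g t ^ ρ) ^ (1 / ρ)
      ≤ (L ^ (1 - ρ) * (h * L ^ σ) ^ ρ) ^ (1 / ρ) :=
    Real.rpow_le_rpow hbase_nonneg key (by positivity)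
  refine hmono.trans_eq ?_
  have h2 : ((h * L ^ σ) ^ ρ) ^ (1 / ρ) = h * L ^ σ := by
    rw [← Real.rpow_mul (by positivity : (0:ℝ) ≤ h * L ^ σ),
      mul_one_div_cancel hρ0.ne', Real.rpow_one]
  have h1 : (L ^ (1 - ρ)) ^ (1 / ρ) = L ^ (1 / ρ - 1) := by
    rw [← Real.rpow_mul hL0.le]
    congr 1
    field_simp
  calc (L ^ (1 - ρ) * (h * L ^ σ) ^ ρ) ^ (1 / ρ)
      = (L ^ (1 - ρ)) ^ (1 / ρ) * ((h * L ^ σ) ^ ρ) ^ (1 / ρ) :=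
        Real.mul_rpow (by positivity) (by positivity)
    _ = h * (L ^ (1 / ρ - 1) * L ^ σ) := by rw [h1, h2]; ring
    _ = h * L ^ (1 / ρ - 1 + σ) := by rw [Real.rpow_add hL0]
    _ = h * (n : ℝ) ^ (-(θ * (σ + 1 / ρ - 1))) := by
        rw [hL, ← Real.rpow_mul (Nat.cast_nonneg n)]
        congr 2
        ring
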